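/- Let F be a field and let M ∈ F^{m×n} be a matrix of rank n. If M is (m,n,r,t)-strongly row rigid, then there is no (n + r − 1, t) linear data structure computing M. -/

import Mathlib

/-- A matrix is `t`-row-sparse if every row has at most `t` nonzero entries. -/
def RowSparse {F : Type*} [Field F] {m k : ℕ} (t : ℕ) (Q : Matrix (Fin m) (Fin k) F) : Prop :=
  ∀ i, {j | Q i j ≠ 0}.ncard ≤ t

/-- `M` is `(m,n,r,t)`-row rigid if every matrix differing from `M` in at most `t`
entries in each row has rank at least `r`. -/
def RowRigid {F : Type*} [Field F] {m n : ℕ} (r t : ℕ) (M : Matrix (Fin m) (Fin n) F) : Prop :=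
  ∀ N : Matrix (Fin m) (Fin n) F,
    (∀ i, {j | M i j ≠ N i j}.ncard ≤ t) → r ≤ N.rank

/-- `M` is `(m,n,r,t)`-strongly row rigid if `M * T` is row rigid for every invertible `T`. -/
def StronglyRowRigid {F : Type*} [Field F] {m n : ℕ} (r t : ℕ)
    (M : Matrix (Fin m) (Fin n) F) : Prop :=
  ∀ T : Matrix (Fin n) (Fin n) F, IsUnit T → RowRigid r t (M * T)

/-- An `(s,t)` linear data structure for `M` is a factorization `M = Q * P` with `Q`
a `t`-row-sparse `m × s` matrix and `P` an `s × n` matrix. -/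
def HasLDS {F : Type*} [Field F] {m n : ℕ} (s t : ℕ) (M : Matrix (Fin m) (Fin n) F) : Prop :=
  ∃ (Q : Matrix (Fin m) (Fin s) F) (P : Matrix (Fin s) (Fin n) F),
    RowSparse t Q ∧ M = Q * P

/-- if `M` has rank `n` and is `(m,n,r,t)`-strongly row rigid, then there is
no `(n + r - 1, t)` linear data structure computing `M`. -/
theorem stronglyRowRigid_implies_no_lds {F : Type*} [Field F] {m n : ℕ}
    (M : Matrix (Fin m) (Fin n) F) (hrank : M.rank = n)
    (r t : ℕ) (hr : 0 < r) (ht : 0 < t)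
    (hrig : StronglyRowRigid r t M) :
    ¬ HasLDS (n + r - 1) t M := by
  classical
  rintro ⟨Q, P, hQ, hM⟩
  -- P has rank n
  have hPrank : P.rank = n := by
    refine le_antisymm (Matrix.rank_le_width P) ?_
    calc (n : ℕ) = M.rank := hrank.symm
    _ = (Q * P).rank := by rw [hM]
    _ ≤ P.rank := Matrix.rank_mul_le_right Q P
  -- rows of P span everything
  have hspan : Submodule.span F (Set.range P) = ⊤ := by
    apply Submodule.eq_top_of_finrank_eq
    rw [show Set.range P = Set.range P.row from rfl, ← Matrix.rank_eq_finrank_span_row, hPrank]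
    simp [Module.finrank_pi]
  obtain ⟨b, hbsub, hbspan, hbli⟩ := exists_linearIndependent F (Set.range P)
  have hbfin : b.Finite := hbli.setFinite
  haveI : Fintype b := hbfin.fintype
  have hbcard : Fintype.card b = n := by
    have h1 : Module.finrank F (Submodule.span F b) = Fintype.card b := by
      rw [finrank_span_set_eq_card hbli, Set.toFinset_card]
    rw [hbspan, hspan] at h1
    rw [← h1]
    simp [Module.finrank_pi]
  obtain e := (Fintype.equivFinOfCardEq hbcard).symm
  have hsel : ∀ x : b, ∃ k, P k = (x : Fin n → F) := fun x => hbsub x.2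
  choose g hg using hsel
  set σ : Fin n → Fin (n + r - 1) := fun j => g (e j) with hσ
  have hrows : (fun j => P (σ j)) = fun j => ((e j : Fin n → F)) := by
    funext j; exact hg (e j)
  have hli : LinearIndependent F (fun j => P (σ j)) := by
    rw [hrows]
    exact hbli.comp e e.injective
  have hσinj : Function.Injective σ := by
    intro a b hab
    have := hli.injective (by simp only [hab] : P (σ a) = P (σ b))
    exact this
  set P₁ : Matrix (Fin n) (Fin n) F := P.submatrix σ id with hP₁
  have hP₁unit : IsUnit P₁ := by
    rw [← Matrix.linearIndependent_rows_iff_isUnit]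
    convert hli using 1
    rfl
  have hP₁det : IsUnit P₁.det := (Matrix.isUnit_iff_isUnit_det P₁).mp hP₁unit
  set T : Matrix (Fin n) (Fin n) F := P₁⁻¹ with hT
  have hTunit : IsUnit T := by
    rw [Matrix.isUnit_iff_isUnit_det]
    exact Matrix.isUnit_nonsing_inv_det _ hP₁det
  set Q₁ : Matrix (Fin m) (Fin n) F := Matrix.of (fun i j => Q i (σ j)) with hQ₁
  set N : Matrix (Fin m) (Fin n) F := M * T - Q₁ with hN
  -- sparsity
  have hsparse : ∀ i, {j | (M * T) i j ≠ N i j}.ncard ≤ t := by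
    intro i
    have hset : {j | (M * T) i j ≠ N i j} = σ ⁻¹' {k | Q i k ≠ 0} := by
      ext j
      simp only [hN, Set.mem_setOf_eq, Matrix.sub_apply, Set.mem_preimage]
      constructor
      · intro h h0
        apply h
        simp [hQ₁, h0]
      · intro h h0
        apply h
        have := sub_eq_self.mp h0.symm
        simpa [hQ₁] using this
    rw [hset]
    calc (σ ⁻¹' {k | Q i k ≠ 0}).ncard
        = (σ '' (σ ⁻¹' {k | Q i k ≠ 0})).ncard :=
          (Set.ncard_image_of_injective _ hσinj).symm
      _ ≤ {k | Q i k ≠ 0}.ncard :=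
          Set.ncard_le_ncard (Set.image_preimage_subset _ _) (Set.toFinite _)
      _ ≤ t := hQ i
  have hkey := hrig T hTunit N hsparse
  -- rank bound
  set A : Matrix (Fin m) {k : Fin (n + r - 1) // k ∉ Set.range σ} F :=
    Matrix.of (fun i k => Q i (k : Fin (n + r - 1))) with hA
  set Psub : Matrix {k : Fin (n + r - 1) // k ∉ Set.range σ} (Fin n) F :=
    P.submatrix Subtype.val id with hPsub
  have hNP₁ : N * P₁ = A * Psub := by
    have h1 : N * P₁ = Q * P - Q₁ * P₁ := by
      rw [hN, Matrix.sub_mul, hT, Matrix.nonsing_inv_mul_cancel_right _ _ hP₁det, hM]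
    rw [h1]
    ext i j
    have hsplit : ∑ k : Fin (n + r - 1), Q i k * P k j =
        (∑ k ∈ Finset.univ.filter (· ∈ Set.range σ), Q i k * P k j) +
        (∑ k ∈ Finset.univ.filter (· ∉ Set.range σ), Q i k * P k j) :=
      (Finset.sum_filter_add_sum_filter_not _ _ _).symm
    have himg : Finset.univ.filter (· ∈ Set.range σ) = Finset.univ.image σ := by
      ext k; simp [Set.mem_range]
    have hpart1 : (∑ k ∈ Finset.univ.filter (· ∈ Set.range σ), Q i k * P k j) =
        ∑ l : Fin n, Q i (σ l) * P (σ l) j := by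
      rw [himg, Finset.sum_image (fun a _ b _ h => hσinj h)]
    have hpart2 : (∑ k ∈ Finset.univ.filter (· ∉ Set.range σ), Q i k * P k j) =
        ∑ k : {k : Fin (n + r - 1) // k ∉ Set.range σ},
          Q i (k : Fin (n + r - 1)) * P (k : Fin (n + r - 1)) j := by
      exact Finset.sum_subtype _ (by simp) _
    simp only [Matrix.sub_apply, Matrix.mul_apply, hA, hPsub, hQ₁, hP₁,
      Matrix.submatrix_apply, Matrix.of_apply, id_eq]
    rw [hsplit, hpart1, hpart2]
    ring
  have hcardK : Fintype.card {k : Fin (n + r - 1) // k ∉ Set.range σ} = r - 1 := by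
    have h1 : Fintype.card {k : Fin (n + r - 1) // k ∈ Set.range σ} = n := by
      calc Fintype.card {k : Fin (n + r - 1) // k ∈ Set.range σ}
          = Nat.card {k : Fin (n + r - 1) // k ∈ Set.range σ} := Nat.card_eq_fintype_card.symm
        _ = Nat.card (Fin n) := (Nat.card_congr (Equiv.ofInjective σ hσinj)).symm
        _ = n := by simp
    have h2 := Fintype.card_subtype_compl (fun k : Fin (n + r - 1) => k ∈ Set.range σ)
    rw [h1, Fintype.card_fin] at h2
    rw [h2]
    omega
  have hrankN : N.rank ≤ r - 1 := by
    have h2 : N = (A * Psub) * T := by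
      rw [← hNP₁, hT, Matrix.mul_nonsing_inv_cancel_right _ _ hP₁det]
    calc N.rank = ((A * Psub) * T).rank := by rw [← h2]
      _ ≤ (A * Psub).rank := Matrix.rank_mul_le_left _ _
      _ ≤ A.rank := Matrix.rank_mul_le_left _ _
      _ ≤ Fintype.card {k : Fin (n + r - 1) // k ∉ Set.range σ} := Matrix.rank_le_card_width A
      _ = r - 1 := hcardK
  omega
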